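/- Suppose Π ∈ M^{m×k}, Π ≠ 0, rank(Π) ≤ r, and let σ⁺_min(Π) be the smallest positive singular value of Π. For ε > 0 define Ψ(Π)₁^ε = {U ∈ S^{k×(k−r)} : min_{U′ ∈ Ψ(Π)} ‖U′ − U‖ ≥ ε}, where Ψ(Π) = argmin_{U ∈ S^{k×(k−r)}} ‖ΠU‖². Then for all sufficiently small ε > 0, min_{U ∈ Ψ(Π)₁^ε} ‖ΠU‖ ≥ (√2/2)·σ⁺_min(Π)·ε. -/

import Mathlib

open Matrix Filter Topology

set_option maxHeartbeats 1600000

noncomputable def frobNormSq {m k : ℕ} (A : Matrix (Fin m) (Fin k) ℝ) : ℝ :=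
  Matrix.trace (Aᵀ * A)

noncomputable def frobNorm {m k : ℕ} (A : Matrix (Fin m) (Fin k) ℝ) : ℝ :=
  Real.sqrt (frobNormSq A)

theorem transpose_mul_self_isHermitian {m k : ℕ} (A : Matrix (Fin m) (Fin k) ℝ) :
    (Aᵀ * A).IsHermitian := by
  have h := Matrix.isHermitian_conjTranspose_mul_self A
  rwa [Matrix.conjTranspose_eq_transpose_of_trivial] at h

/-- `sv A j` is the `j+1`-th largest singular value of `A`. -/
noncomputable def sv {m k : ℕ} (A : Matrix (Fin m) (Fin k) ℝ) : Fin k → ℝ :=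
  fun j =>
    Real.sqrt ((transpose_mul_self_isHermitian A).eigenvalues
      (Tuple.sort ((transpose_mul_self_isHermitian A).eigenvalues) j.rev))

/-- `phi r A` is the sum of the squared singular values `σ_{r+1}², …, σ_k²`. -/
noncomputable def phi {m k : ℕ} (r : ℕ) (A : Matrix (Fin m) (Fin k) ℝ) : ℝ :=
  ∑ j ∈ Finset.univ.filter (fun j : Fin k => r ≤ (j : ℕ)), sv A j ^ 2

/-- The argmin set `Ψ(A)` of `U ↦ ‖A U‖²` over matrices with orthonormal columns. -/
noncomputable def argminSet {m k : ℕ} (d : ℕ) (A : Matrix (Fin m) (Fin k) ℝ) :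
    Set (Matrix (Fin k) (Fin d) ℝ) :=
  {U | Uᵀ * U = 1 ∧ ∀ V : Matrix (Fin k) (Fin d) ℝ, Vᵀ * V = 1 →
    frobNormSq (A * U) ≤ frobNormSq (A * V)}

noncomputable def phiDeriv {m k : ℕ} (r : ℕ) (A M : Matrix (Fin m) (Fin k) ℝ) : ℝ :=
  sInf {x : ℝ | ∃ U ∈ argminSet (k - r) A, x = 2 * Matrix.trace ((A * U)ᵀ * (M * U))}


/-- The smallest positive singular value. -/
noncomputable def svMinPos {m k : ℕ} (A : Matrix (Fin m) (Fin k) ℝ) : ℝ :=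
  sInf {x : ℝ | 0 < x ∧ ∃ j, sv A j = x}

lemma frobNormSq_eq_sum {m k : ℕ} (A : Matrix (Fin m) (Fin k) ℝ) :
    frobNormSq A = ∑ j, ∑ i, (A i j)^2 := by
  unfold frobNormSq
  rw [Matrix.trace]
  refine Finset.sum_congr rfl fun j _ => ?_
  rw [Matrix.diag, Matrix.mul_apply]
  exact Finset.sum_congr rfl fun i _ => by rw [Matrix.transpose_apply, sq]

lemma frobNormSq_nonneg {m k : ℕ} (A : Matrix (Fin m) (Fin k) ℝ) : 0 ≤ frobNormSq A := by
  rw [frobNormSq_eq_sum]; positivity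

lemma frobNormSq_eq_zero {m k : ℕ} {A : Matrix (Fin m) (Fin k) ℝ}
    (h : frobNormSq A = 0) : A = 0 := by
  rw [frobNormSq_eq_sum] at h
  ext i j
  have h1 := (Finset.sum_eq_zero_iff_of_nonneg (fun j _ => by positivity)).mp h j (Finset.mem_univ j)
  have h2 := (Finset.sum_eq_zero_iff_of_nonneg (fun i _ => by positivity)).mp h1 i (Finset.mem_univ i)
  simpa [pow_eq_zero_iff] using h2

section sandwich

variable {N : Type*} [Fintype N] [DecidableEq N]

lemma sand_mul (Z : Matrix N N ℝ) (hZ : Zᵀ * Z = 1) (a b : N → ℝ) :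
    (Z * diagonal a * Zᵀ) * (Z * diagonal b * Zᵀ)
      = Z * diagonal (fun i => a i * b i) * Zᵀ := by
  have : diagonal a * (Zᵀ * (Z * (diagonal b * Zᵀ))) = diagonal (fun i => a i * b i) * Zᵀ := by
    rw [← Matrix.mul_assoc Zᵀ Z, hZ, Matrix.one_mul, ← Matrix.mul_assoc,
      Matrix.diagonal_mul_diagonal]
  simp only [Matrix.mul_assoc, this]

lemma sand_trace (Z : Matrix N N ℝ) (hZ : Zᵀ * Z = 1) (a : N → ℝ) :
    trace (Z * diagonal a * Zᵀ) = ∑ i, a i := by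
  rw [Matrix.trace_mul_comm, ← Matrix.mul_assoc, hZ, Matrix.one_mul, Matrix.trace_diagonal]

lemma sand_transpose (Z : Matrix N N ℝ) (a : N → ℝ) :
    (Z * diagonal a * Zᵀ)ᵀ = Z * diagonal a * Zᵀ := by
  rw [Matrix.transpose_mul, Matrix.transpose_mul, Matrix.transpose_transpose,
    Matrix.diagonal_transpose, Matrix.mul_assoc]

lemma sand_sub (Z : Matrix N N ℝ) (a b : N → ℝ) :
    Z * diagonal a * Zᵀ - Z * diagonal b * Zᵀ = Z * diagonal (fun i => a i - b i) * Zᵀ := by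
  have : diagonal (fun i => a i - b i) = diagonal a - diagonal b := by
    ext i j; by_cases h : i = j <;> simp [Matrix.diagonal_apply, h]
  rw [this, Matrix.mul_sub, Matrix.sub_mul]

lemma sand_one (Z : Matrix N N ℝ) (hZZ : Z * Zᵀ = 1) :
    (1 : Matrix N N ℝ) = Z * diagonal (fun _ => (1:ℝ)) * Zᵀ := by
  rw [Matrix.diagonal_one, Matrix.mul_one, hZZ]

lemma sand_conj {M : Type*} [Fintype M] (Z : Matrix N N ℝ) (a : N → ℝ) (U : Matrix N M ℝ) :
    Uᵀ * (Z * diagonal a * Zᵀ) * U = (Zᵀ * U)ᵀ * diagonal a * (Zᵀ * U) := by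
  rw [Matrix.transpose_mul, Matrix.transpose_transpose]
  simp only [Matrix.mul_assoc]

lemma trace_conj_diag_nonneg {M : Type*} [Fintype M] (c : N → ℝ) (hc : ∀ i, 0 ≤ c i)
    (M' : Matrix N M ℝ) : 0 ≤ trace (M'ᵀ * diagonal c * M') := by
  rw [Matrix.trace]
  refine Finset.sum_nonneg fun j _ => ?_
  rw [Matrix.diag, Matrix.mul_apply]
  refine Finset.sum_nonneg fun i _ => ?_
  rw [Matrix.mul_diagonal, Matrix.transpose_apply]
  have := hc i
  nlinarith [sq_nonneg (M' i j)]

lemma spectral_real {A : Matrix N N ℝ} (hA : A.IsHermitian) :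
    A = (hA.eigenvectorUnitary : Matrix N N ℝ) * diagonal hA.eigenvalues
      * (hA.eigenvectorUnitary : Matrix N N ℝ)ᵀ := by
  have h := hA.spectral_theorem
  rwa [Unitary.conjStarAlgAut_apply, Matrix.star_eq_conjTranspose,
    Matrix.conjTranspose_eq_transpose_of_trivial] at h

lemma unitary_tmul {A : Matrix N N ℝ} (hA : A.IsHermitian) :
    (hA.eigenvectorUnitary : Matrix N N ℝ)ᵀ * (hA.eigenvectorUnitary : Matrix N N ℝ) = 1 := by
  have h := Unitary.coe_star_mul_self hA.eigenvectorUnitary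
  rwa [Matrix.star_eq_conjTranspose, Matrix.conjTranspose_eq_transpose_of_trivial] at h

end sandwich

/-- away (by at least `ε`) from the argmin set `Ψ(A)`, `‖A U‖` is bounded
below by `(√2/2)·σ⁺_min(A)·ε`, for all sufficiently small `ε > 0`. -/
theorem frobNorm_lower_bound_away_from_argmin {m k : ℕ} (hk : k ≤ m) (r : ℕ) (hr : r < k)
    (A : Matrix (Fin m) (Fin k) ℝ) (hA : A ≠ 0) (hrank : A.rank ≤ r) :
    ∃ ε₀ > (0 : ℝ), ∀ ε : ℝ, 0 < ε → ε ≤ ε₀ →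
      ∀ U : Matrix (Fin k) (Fin (k - r)) ℝ, Uᵀ * U = 1 →
        (∀ U' ∈ argminSet (k - r) A, ε ≤ frobNorm (U' - U)) →
        Real.sqrt 2 / 2 * svMinPos A * ε ≤ frobNorm (A * U) := by
  classical
  refine ⟨Real.sqrt 2, by positivity, fun ε hε hεle U hU hfar => ?_⟩
  have hH : (Aᵀ * A).IsHermitian := transpose_mul_self_isHermitian A
  set μ : Fin k → ℝ := hH.eigenvalues with hμdef
  set Z : Matrix (Fin k) (Fin k) ℝ := (hH.eigenvectorUnitary : Matrix (Fin k) (Fin k) ℝ)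
    with hZdef
  have hZ : Zᵀ * Z = 1 := unitary_tmul hH
  have hZZ : Z * Zᵀ = 1 := mul_eq_one_comm.mp hZ
  have hspec : Aᵀ * A = Z * diagonal μ * Zᵀ := spectral_real hH
  have hμ0 : ∀ j, 0 ≤ μ j := by
    intro j
    have hpsd := Matrix.posSemidef_conjTranspose_mul_self A
    rw [Matrix.conjTranspose_eq_transpose_of_trivial] at hpsd
    exact hpsd.eigenvalues_nonneg j
  set σ : ℝ := svMinPos A with hσdef
  have hσ0 : 0 ≤ σ := Real.sInf_nonneg (fun x hx => hx.1.le)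
  have hσle : ∀ j, μ j ≠ 0 → σ^2 ≤ μ j := by
    intro j hj
    have hjpos : 0 < μ j := lt_of_le_of_ne (hμ0 j) (Ne.symm hj)
    have hsv : sv A (((Tuple.sort μ)⁻¹ j).rev) = Real.sqrt (μ j) := by
      have h1 : sv A (((Tuple.sort μ)⁻¹ j).rev)
          = Real.sqrt (μ (Tuple.sort μ ((((Tuple.sort μ)⁻¹ j)).rev.rev))) := rfl
      rw [h1, Fin.rev_rev, ← Equiv.Perm.mul_apply, mul_inv_cancel, Equiv.Perm.one_apply]
    have hmem : Real.sqrt (μ j) ∈ {x : ℝ | 0 < x ∧ ∃ i, sv A i = x} :=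
      ⟨Real.sqrt_pos.mpr hjpos, ⟨_, hsv⟩⟩
    have hle : σ ≤ Real.sqrt (μ j) := csInf_le ⟨0, fun x hx => hx.1.le⟩ hmem
    calc σ^2 ≤ (Real.sqrt (μ j))^2 := pow_le_pow_left₀ hσ0 hle 2
      _ = μ j := Real.sq_sqrt hjpos.le
  -- projections
  set g : Fin k → ℝ := fun j => if μ j = 0 then 1 else 0 with hgdef
  set q : Fin k → ℝ := fun j => 1 - g j with hqdef
  set P : Matrix (Fin k) (Fin k) ℝ := Z * diagonal g * Zᵀ with hPdef
  set Q : Matrix (Fin k) (Fin k) ℝ := Z * diagonal q * Zᵀ with hQdef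
  have hgg : ∀ j, g j * g j = g j := by
    intro j; by_cases h : μ j = 0 <;> simp [hgdef, h]
  have hqq : ∀ j, q j * q j = q j := by
    intro j; by_cases h : μ j = 0 <;> simp [hqdef, hgdef, h]
  have hPt : Pᵀ = P := by rw [hPdef]; exact sand_transpose Z g
  have hQt : Qᵀ = Q := by rw [hQdef]; exact sand_transpose Z q
  have hPP : P * P = P := by
    rw [hPdef, sand_mul Z hZ]
    rw [show (fun i => g i * g i) = g from funext hgg]
  have hQQ : Q * Q = Q := by
    rw [hQdef, sand_mul Z hZ]
    rw [show (fun i => q i * q i) = q from funext hqq]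
  have hAP : A * P = 0 := by
    apply frobNormSq_eq_zero
    have h1 : (A * P)ᵀ * (A * P) = Pᵀ * (Aᵀ * A) * P := by
      rw [Matrix.transpose_mul]
      simp only [Matrix.mul_assoc]
    have h2 : Pᵀ * (Aᵀ * A) * P = Z * diagonal (fun j => g j * μ j * g j) * Zᵀ := by
      rw [hPt, hPdef, hspec, sand_mul Z hZ g μ, sand_mul Z hZ (fun i => g i * μ i) g]
    have h3 : ∀ j, g j * μ j * g j = 0 := by
      intro j; by_cases h : μ j = 0 <;> simp [hgdef, h]
    unfold frobNormSq
    rw [h1, h2, sand_trace Z hZ]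
    exact Finset.sum_eq_zero fun j _ => h3 j
  have hPQ : P = 1 - Q := by
    rw [hPdef, hQdef, sand_one Z hZZ, sand_sub]
    rw [show (fun i => (1:ℝ) - q i) = g from funext fun i => by simp [hqdef]]
  have hQUQU : (Q * U)ᵀ * (Q * U) = Uᵀ * Q * U := by
    rw [Matrix.transpose_mul, hQt]
    have hx : Uᵀ * Q * (Q * U) = Uᵀ * (Q * Q * U) := by simp only [Matrix.mul_assoc]
    rw [hx, hQQ]
    simp only [Matrix.mul_assoc]
  -- the quantity dsq
  set dsq : ℝ := frobNormSq (Q * U) with hdsqdef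
  have hdsq0 : 0 ≤ dsq := frobNormSq_nonneg _
  have hdsq_tr : dsq = trace (Uᵀ * Q * U) := by
    rw [hdsqdef]; unfold frobNormSq; rw [hQUQU]
  have hAUtr : frobNormSq (A * U) = trace (Uᵀ * (Aᵀ * A) * U) := by
    unfold frobNormSq
    rw [Matrix.transpose_mul]
    simp only [Matrix.mul_assoc]
  -- key 1 : σ² · dsq ≤ ‖AU‖²
  have key1 : σ^2 * dsq ≤ frobNormSq (A * U) := by
    set c : Fin k → ℝ := fun j => μ j - σ^2 * q j with hcdef
    have hc : ∀ j, 0 ≤ c j := by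
      intro j
      by_cases h : μ j = 0
      · simp [hcdef, hqdef, hgdef, h]
      · have := hσle j h
        simp only [hcdef, hqdef, hgdef, if_neg h]
        linarith
    have hpos : 0 ≤ trace (Uᵀ * (Z * diagonal c * Zᵀ) * U) := by
      rw [sand_conj]
      exact trace_conj_diag_nonneg c hc _
    have hsmul : σ^2 • Q = Z * diagonal (fun j => σ^2 * q j) * Zᵀ := by
      have h1 : diagonal (fun j => σ^2 * q j) = σ^2 • diagonal q := by
        ext i j; by_cases h : i = j <;> simp [Matrix.diagonal_apply, h]
      rw [h1, hQdef, mul_smul_comm, smul_mul_assoc]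
    have hsplit : Z * diagonal c * Zᵀ = (Aᵀ * A) - σ^2 • Q := by
      rw [hspec, hsmul, sand_sub]
    have hlin : trace (Uᵀ * (Z * diagonal c * Zᵀ) * U)
        = trace (Uᵀ * (Aᵀ * A) * U) - σ^2 * trace (Uᵀ * Q * U) := by
      rw [hsplit, Matrix.mul_sub, Matrix.sub_mul, Matrix.trace_sub, Matrix.mul_smul,
        Matrix.smul_mul, Matrix.trace_smul, smul_eq_mul]
    rw [hAUtr, hdsq_tr]
    rw [hlin] at hpos
    linarith
  -- key 2 : ε² ≤ 2 · dsq
  have key2 : ε^2 ≤ 2 * dsq := by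
    rcases le_or_gt 1 dsq with h1 | h1
    · have h2 : ε^2 ≤ (Real.sqrt 2)^2 := pow_le_pow_left₀ hε.le hεle 2
      rw [Real.sq_sqrt (by norm_num : (0:ℝ) ≤ 2)] at h2
      linarith
    · -- construct the nearby element V of the argmin set
      set B : Matrix (Fin k) (Fin (k - r)) ℝ := Q * U with hBdef
      set G : Matrix (Fin (k - r)) (Fin (k - r)) ℝ := Bᵀ * B with hGdef
      have hGH : G.IsHermitian := transpose_mul_self_isHermitian B
      set e : Fin (k - r) → ℝ := hGH.eigenvalues with hedef
      set W : Matrix (Fin (k - r)) (Fin (k - r)) ℝ :=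
        (hGH.eigenvectorUnitary : Matrix (Fin (k - r)) (Fin (k - r)) ℝ) with hWdef
      have hW : Wᵀ * W = 1 := unitary_tmul hGH
      have hWW : W * Wᵀ = 1 := mul_eq_one_comm.mp hW
      have hGspec : G = W * diagonal e * Wᵀ := spectral_real hGH
      have he0 : ∀ i, 0 ≤ e i := by
        intro i
        have hpsd := Matrix.posSemidef_conjTranspose_mul_self B
        rw [Matrix.conjTranspose_eq_transpose_of_trivial] at hpsd
        exact hpsd.eigenvalues_nonneg i
      have htrG : trace G = dsq := rfl
      have hsum : ∑ i, e i = dsq := by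
        rw [← htrG]
        conv_lhs => rw [← sand_trace W hW e]
        rw [← hGspec]
      have he1 : ∀ i, e i < 1 := by
        intro i
        have h2 : e i ≤ ∑ j, e j := Finset.single_le_sum (fun j _ => he0 j) (Finset.mem_univ i)
        rw [hsum] at h2
        linarith
      have hepos : ∀ i, 0 < 1 - e i := fun i => by linarith [he1 i]
      set f : Fin (k - r) → ℝ := fun i => (Real.sqrt (1 - e i))⁻¹ with hfdef
      set T : Matrix (Fin (k - r)) (Fin (k - r)) ℝ := W * diagonal f * Wᵀ with hTdef
      set V : Matrix (Fin k) (Fin (k - r)) ℝ := P * U * T with hVdef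
      have hsqrt_ne : ∀ i, Real.sqrt (1 - e i) ≠ 0 :=
        fun i => ne_of_gt (Real.sqrt_pos.mpr (hepos i))
      have hGalt : G = Uᵀ * Q * U := hQUQU
      have hAV : A * V = 0 := by
        rw [hVdef]
        simp only [← Matrix.mul_assoc]
        rw [hAP, Matrix.zero_mul, Matrix.zero_mul]
      have hPUPU : (P * U)ᵀ * (P * U) = Uᵀ * (P * U) := by
        rw [Matrix.transpose_mul, hPt]
        have hx : Uᵀ * P * (P * U) = Uᵀ * (P * P * U) := by simp only [Matrix.mul_assoc]
        rw [hx, hPP]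
      have hUPU : Uᵀ * (P * U) = W * diagonal (fun i => 1 - e i) * Wᵀ := by
        have h2 : Uᵀ * (P * U) = 1 - G := by
          rw [hPQ, Matrix.sub_mul, Matrix.one_mul, Matrix.mul_sub, hU, hGalt]
          simp only [Matrix.mul_assoc]
        rw [h2]
        conv_lhs => rw [sand_one W hWW, hGspec]
        rw [sand_sub]
      have hTt : Tᵀ = T := by rw [hTdef]; exact sand_transpose W f
      have hinv : ∀ s : ℝ, 0 < s → s * (Real.sqrt s)⁻¹ = Real.sqrt s := by
        intro s hs
        have h := Real.sqrt_pos.mpr hs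
        have h2 : s * (Real.sqrt s)⁻¹ = (Real.sqrt s * Real.sqrt s) * (Real.sqrt s)⁻¹ := by
          rw [Real.mul_self_sqrt hs.le]
        rw [h2, mul_inv_cancel_right₀ (ne_of_gt h)]
      have hVV : Vᵀ * V = 1 := by
        have h3 : Vᵀ * V = Tᵀ * ((P * U)ᵀ * (P * U)) * T := by
          rw [hVdef, Matrix.transpose_mul]
          simp only [Matrix.mul_assoc]
        rw [h3, hPUPU, hUPU, hTt, hTdef, sand_mul W hW, sand_mul W hW]
        have h4 : (fun i => f i * (1 - e i) * f i) = fun _ => (1:ℝ) := by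
          funext i
          have hs := hepos i
          simp only [hfdef]
          rw [mul_comm ((Real.sqrt (1 - e i))⁻¹) (1 - e i), hinv _ hs]
          exact mul_inv_cancel₀ (hsqrt_ne i)
        rw [h4, ← sand_one W hWW]
      have hVmem : V ∈ argminSet (k - r) A := by
        refine ⟨hVV, fun V' hV' => ?_⟩
        rw [hAV]
        have h0 : frobNormSq (0 : Matrix (Fin m) (Fin (k - r)) ℝ) = 0 := by
          rw [frobNormSq_eq_sum]; simp
        rw [h0]
        exact frobNormSq_nonneg _
      have hfarV := hfar V hVmem
      have hεsq : ε^2 ≤ frobNormSq (V - U) := by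
        have h0 := frobNormSq_nonneg (V - U)
        have h2 := pow_le_pow_left₀ hε.le hfarV 2
        rwa [frobNorm, Real.sq_sqrt h0] at h2
      have htrUV : trace (Uᵀ * V) = ∑ i, Real.sqrt (1 - e i) := by
        have h2 : Uᵀ * V = Uᵀ * (P * U) * T := by
          rw [hVdef]
          simp only [Matrix.mul_assoc]
        rw [h2, hUPU, hTdef, sand_mul W hW, sand_trace W hW]
        refine Finset.sum_congr rfl fun i _ => ?_
        simp only [hfdef]
        exact hinv _ (hepos i)
      have htrVU : trace (Vᵀ * U) = trace (Uᵀ * V) := by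
        rw [← Matrix.trace_transpose (Vᵀ * U), Matrix.transpose_mul,
          Matrix.transpose_transpose]
      have hexp : frobNormSq (V - U)
          = trace (1 : Matrix (Fin (k - r)) (Fin (k - r)) ℝ)
            + trace (1 : Matrix (Fin (k - r)) (Fin (k - r)) ℝ) - 2 * trace (Uᵀ * V) := by
        unfold frobNormSq
        rw [Matrix.transpose_sub, Matrix.sub_mul, Matrix.mul_sub, Matrix.mul_sub,
          Matrix.trace_sub, Matrix.trace_sub, Matrix.trace_sub, hVV, hU, htrVU]
        ring
      have hsum1 : ∑ i : Fin (k - r), (1 - e i)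
          = (Fintype.card (Fin (k - r)) : ℝ) - dsq := by
        rw [Finset.sum_sub_distrib, Finset.sum_const, hsum]
        simp [Finset.card_univ]
      have hsqrt_ge : ∀ i, 1 - e i ≤ Real.sqrt (1 - e i) := by
        intro i
        have hs := hepos i
        have ht1 : Real.sqrt (1 - e i) ≤ 1 := Real.sqrt_le_one.mpr (by linarith [he0 i])
        nlinarith [Real.sq_sqrt hs.le, Real.sqrt_nonneg (1 - e i)]
      have hsum2 : (Fintype.card (Fin (k - r)) : ℝ) - dsq ≤ ∑ i, Real.sqrt (1 - e i) := by
        rw [← hsum1]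
        exact Finset.sum_le_sum fun i _ => hsqrt_ge i
      rw [hexp, Matrix.trace_one, htrUV] at hεsq
      linarith
  -- finish
  have hfin : (Real.sqrt 2 / 2 * σ * ε)^2 ≤ frobNormSq (A * U) := by
    have hs2 : (Real.sqrt 2)^2 = 2 := Real.sq_sqrt (by norm_num)
    nlinarith [mul_le_mul_of_nonneg_left key2 (sq_nonneg σ), key1]
  have hnn : 0 ≤ Real.sqrt 2 / 2 * σ * ε :=
    mul_nonneg (mul_nonneg (by positivity) hσ0) hε.le
  calc Real.sqrt 2 / 2 * σ * ε = Real.sqrt ((Real.sqrt 2 / 2 * σ * ε)^2) :=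
        (Real.sqrt_sq hnn).symm
    _ ≤ Real.sqrt (frobNormSq (A * U)) := Real.sqrt_le_sqrt hfin
    _ = frobNorm (A * U) := rfl
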